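/- arXiv:math/0603418 — 3 statements merged into one kernel-verified Lean document; each statement's English description precedes it below -/
import Mathlib

section
/- Let λ, A, D ∈ ℂ with A ≠ 0, |λ| > 1, x := λ + λ^{-1} satisfying 0 < |x| < 0.5 and x ∉ ℝ, AD = x²/(x²-4), and 1 ≤ |D/A| ≤ |λ|. Then either |A + D| < |x| or |Aλ + Dλ^{-1}| < |x|. -/
open Complex

set_option maxHeartbeats 1000000 in
theorem stmt_10 (lam A D : ℂ) (hA : A ≠ 0) (hlam : ‖lam‖ > 1)
    (x : ℂ) (hx : x = lam + lam⁻¹)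
    (h0 : 0 < ‖x‖) (h1 : ‖x‖ < 0.5)
    (hxR : x.im ≠ 0)
    (hAD : A * D = x ^ 2 / (x ^ 2 - 4))
    (hr1 : 1 ≤ ‖D / A‖) (hr2 : ‖D / A‖ ≤ ‖lam‖) :
    ‖A + D‖ < ‖x‖ ∨
      ‖A * lam + D * lam⁻¹‖ < ‖x‖ := by
  have hlam0 : lam ≠ 0 := by
    intro h; rw [h] at hlam; simp at hlam; linarith
  have hx0 : x ≠ 0 := by
    intro h; rw [h] at h0; simp at h0
  set r : ℝ := ‖lam‖ with hrdef
  set X : ℝ := ‖x‖ with hXdef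
  set a : ℝ := ‖A‖ with hadef
  set d : ℝ := ‖D‖ with hddef
  have hr0 : (1:ℝ) < r := hlam
  have hrpos : (0:ℝ) < r := by linarith
  have ha0 : 0 < a := by
    simpa [hadef] using (norm_pos_iff.mpr hA)
  have hXhalf : X < 1/2 := lt_of_lt_of_le h1 (by norm_num)
  -- x^2 - 4 = (lam - lam⁻¹)^2
  have hE4 : x ^ 2 - 4 = (lam - lam⁻¹) ^ 2 := by
    rw [hx]; field_simp; ring
  set μ : ℂ := lam * ((starRingEnd ℂ) lam)⁻¹ with hmu
  set c : ℝ := μ.re with hc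
  have hnormSqlam : Complex.normSq lam = r ^ 2 := (Complex.sq_norm lam).symm
  have hcross1 : lam * (starRingEnd ℂ) lam⁻¹ = μ := by
    rw [map_inv₀]
  have hE1 : X ^ 2 = r ^ 2 + (r ^ 2)⁻¹ + 2 * c := by
    rw [hXdef, Complex.sq_norm, hx, Complex.normSq_add, hcross1, Complex.normSq_inv,
      hnormSqlam]
  have hnsmu : Complex.normSq μ = 1 := by
    rw [hmu, Complex.normSq_mul, Complex.normSq_inv, Complex.normSq_conj, hnormSqlam]
    field_simp
  have hE2 : Complex.normSq (1 + μ) = 2 + 2 * c := by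
    rw [Complex.normSq_add, hnsmu]
    simp only [Complex.normSq_one, one_mul, Complex.conj_re, hc]
    ring
  set L2 : ℝ := Complex.normSq (lam - lam⁻¹) with hL2
  have hE3 : L2 = r ^ 2 + (r ^ 2)⁻¹ - 2 * c := by
    have hsplit : lam - lam⁻¹ = lam + -lam⁻¹ := by ring
    rw [hL2, hsplit, Complex.normSq_add, Complex.normSq_neg, Complex.normSq_inv,
      hnormSqlam, map_neg, mul_neg, hcross1, Complex.neg_re]
    simp only [hc]
    ring
  have hrr : (r ^ 2)⁻¹ = r⁻¹ ^ 2 := (inv_pow r 2).symm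
  have hrinvpos : 0 < r⁻¹ := inv_pos.mpr hrpos
  have hrinv : r⁻¹ < 1 := by
    rw [inv_lt_one_iff₀]; right; exact hr0
  have hrmul : r * r⁻¹ = 1 := mul_inv_cancel₀ (ne_of_gt hrpos)
  have hrsum : (2:ℝ) ≤ r ^ 2 + (r ^ 2)⁻¹ := by
    have hexp : (r - r⁻¹) ^ 2 = r ^ 2 - 2 * (r * r⁻¹) + r⁻¹ ^ 2 := by ring
    linarith [sq_nonneg (r - r⁻¹), hexp, hrmul, hrr]
  have hX2 : X ^ 2 < 1/4 := by
    have h5 : X * X < (1/2) * (1/2) := mul_lt_mul'' hXhalf hXhalf (le_of_lt h0) (le_of_lt h0)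
    have h6 : X ^ 2 = X * X := sq X
    linarith
  have hL2pos : (15:ℝ)/4 < L2 := by
    linarith [hE1, hE3, hrsum, hX2]
  have hL2pos' : (0:ℝ) < L2 := by linarith
  -- r - 1/r ≤ X and r < 3/2
  have hrx : r ≤ X + r⁻¹ := by
    have hl : lam = x + (-lam⁻¹) := by rw [hx]; ring
    calc r = ‖x + (-lam⁻¹)‖ := by rw [← hl]
      _ ≤ ‖x‖ + ‖-lam⁻¹‖ := norm_add_le _ _
      _ = X + r⁻¹ := by rw [norm_neg, norm_inv]
  have hr' : r * r ≤ X * r + 1 := by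
    have h2 := mul_le_mul_of_nonneg_right hrx (le_of_lt hrpos)
    rwa [add_mul, inv_mul_cancel₀ (ne_of_gt hrpos)] at h2
  have hXr : X * r < (1/2) * r := mul_lt_mul_of_pos_right hXhalf hrpos
  have hr32 : r < 3/2 := by
    by_contra hge
    push_neg at hge
    have h7 : (3/2) * r ≤ r * r := mul_le_mul_of_nonneg_right hge (le_of_lt hrpos)
    linarith [hr', hXr]
  -- nonvanishing
  have hll : lam - lam⁻¹ ≠ 0 := by
    intro h
    have : L2 = 0 := by rw [hL2, h]; simp
    linarith
  have hxx0 : x ^ 2 - 4 ≠ 0 := by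
    rw [hE4]; exact pow_ne_zero 2 hll
  have hD0 : D ≠ 0 := by
    intro h
    rw [h, mul_zero] at hAD
    have h' := hAD.symm
    rw [div_eq_zero_iff] at h'
    rcases h' with h' | h'
    · exact hx0 (pow_eq_zero_iff two_ne_zero |>.mp h')
    · exact hxx0 h'
  have hd0 : 0 < d := by
    simpa [hddef] using (norm_pos_iff.mpr hD0)
  -- a*d = X^2 / L2
  have habsAD : a * d = X ^ 2 / L2 := by
    have h1' : ‖A * D‖ = ‖x ^ 2‖ / ‖x ^ 2 - 4‖ := by
      rw [hAD, norm_div]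
    rw [norm_mul, hE4, norm_pow, norm_pow] at h1'
    have h2' : ‖lam - lam⁻¹‖ ^ 2 = L2 := Complex.sq_norm _
    rw [h2'] at h1'
    exact h1'
  have hadL : a * d * L2 = X ^ 2 := by
    rw [habsAD]; field_simp
  -- a ≤ d ≤ r*a
  have hdivad : ‖D / A‖ = d / a := norm_div _ _
  have had1 : a ≤ d := by
    rw [hdivad, le_div_iff₀ ha0] at hr1
    linarith
  have had2 : d ≤ r * a := by
    rw [hdivad, div_le_iff₀ ha0] at hr2
    linarith
  -- normSq expansions
  set T : ℂ := A * (starRingEnd ℂ) D with hT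
  have hN1 : Complex.normSq (A + D) = a ^ 2 + d ^ 2 + 2 * T.re := by
    rw [Complex.normSq_add, ← Complex.sq_norm A, ← Complex.sq_norm D]
  have hcross2 : A * lam * (starRingEnd ℂ) (D * lam⁻¹) = T * μ := by
    rw [hT, hmu, map_mul, map_inv₀]; ring
  have hN2 : Complex.normSq (A * lam + D * lam⁻¹) =
      a ^ 2 * r ^ 2 + d ^ 2 * (r ^ 2)⁻¹ + 2 * (T * μ).re := by
    rw [Complex.normSq_add, Complex.normSq_mul, Complex.normSq_mul, Complex.normSq_inv,
      hnormSqlam, hcross2, ← Complex.sq_norm A, ← Complex.sq_norm D]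
  -- cross term bound
  have habs1mu : ‖1 + μ‖ ≤ X := by
    have h2c : ‖1 + μ‖ ^ 2 ≤ X ^ 2 := by
      rw [Complex.sq_norm, hE2]; linarith [hE1, hrsum]
    exact le_of_pow_le_pow_left₀ two_ne_zero (le_of_lt h0) h2c
  have hcrossbound : (T * (1 + μ)).re ≤ a * d * X := by
    calc (T * (1 + μ)).re ≤ ‖T * (1 + μ)‖ := Complex.re_le_norm _
      _ = a * d * ‖1 + μ‖ := by
          rw [norm_mul, hT, norm_mul, Complex.norm_conj]
      _ ≤ a * d * X := by
          apply mul_le_mul_of_nonneg_left habs1mu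
          positivity
  have hresum : T.re + (T * μ).re = (T * (1 + μ)).re := by
    rw [mul_add, mul_one, Complex.add_re]
  -- main bound
  have hS : Complex.normSq (A + D) + Complex.normSq (A * lam + D * lam⁻¹) < 2 * X ^ 2 := by
    rw [hN1, hN2]
    have e1 : a ^ 2 ≤ a * d := by
      rw [sq]; exact mul_le_mul_of_nonneg_left had1 (le_of_lt ha0)
    have e2 : a ^ 2 * r ^ 2 ≤ a * d * r ^ 2 :=
      mul_le_mul_of_nonneg_right e1 (sq_nonneg r)
    have e3 : d ^ 2 ≤ a * d * r := by
      rw [sq]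
      calc d * d ≤ (r * a) * d := mul_le_mul_of_nonneg_right had2 (le_of_lt hd0)
        _ = a * d * r := by ring
    have e4 : d ^ 2 * (r ^ 2)⁻¹ ≤ a * d * r⁻¹ := by
      have h5 : d ^ 2 * (r ^ 2)⁻¹ ≤ (a * d * r) * (r ^ 2)⁻¹ := by
        apply mul_le_mul_of_nonneg_right e3; positivity
      calc d ^ 2 * (r ^ 2)⁻¹ ≤ (a * d * r) * (r ^ 2)⁻¹ := h5
        _ = a * d * r⁻¹ := by field_simp
    have hB : a ^ 2 + d ^ 2 + a ^ 2 * r ^ 2 + d ^ 2 * (r ^ 2)⁻¹ + 2 * (T * (1 + μ)).re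
        ≤ a * d * (1 + r ^ 2 + r + r⁻¹ + 2 * X) := by
      linarith [hcrossbound, e1, e2, e3, e4]
    have hBnum : 1 + r ^ 2 + r + r⁻¹ + 2 * X < 27/4 := by
      linarith [hr', hXr, hr32, hrinv, hXhalf]
    have hadpos : 0 < a * d := mul_pos ha0 hd0
    calc a ^ 2 + d ^ 2 + 2 * T.re + (a ^ 2 * r ^ 2 + d ^ 2 * (r ^ 2)⁻¹ + 2 * (T * μ).re)
        = a ^ 2 + d ^ 2 + a ^ 2 * r ^ 2 + d ^ 2 * (r ^ 2)⁻¹ + 2 * (T * (1 + μ)).re := by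
          rw [← hresum]; ring
      _ ≤ a * d * (1 + r ^ 2 + r + r⁻¹ + 2 * X) := hB
      _ < a * d * (2 * L2) := by
          apply mul_lt_mul_of_pos_left _ hadpos
          linarith
      _ = 2 * X ^ 2 := by rw [← hadL]; ring
  -- conclude
  by_contra hcon
  push_neg at hcon
  obtain ⟨hc1, hc2⟩ := hcon
  have hq1 : X ^ 2 ≤ Complex.normSq (A + D) := by
    rw [← Complex.sq_norm]
    exact pow_le_pow_left₀ (le_of_lt h0) hc1 2
  have hq2 : X ^ 2 ≤ Complex.normSq (A * lam + D * lam⁻¹) := by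
    rw [← Complex.sq_norm]
    exact pow_le_pow_left₀ (le_of_lt h0) hc2 2
  linarith
end

section
/- Let λ ∈ ℂ with |λ| > 1 and x = λ + λ^{-1} with |x| < 0.5. Let A, D ∈ ℂ with AD = x²/(x²-4), A ≠ 0, and 1 ≤ |D/A| ≤ |λ|. If |1 + D/A| ≥ √3.75, then |λ + D/(Aλ)| < √3.75. -/
theorem stmt_14 (lam A D : ℂ) (hA : A ≠ 0) (hlam : ‖lam‖ > 1)
    (x : ℂ) (hx : x = lam + lam⁻¹) (h1 : ‖x‖ < 0.5)
    (hAD : A * D = x ^ 2 / (x ^ 2 - 4))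
    (hr1 : 1 ≤ ‖D / A‖) (hr2 : ‖D / A‖ ≤ ‖lam‖)
    (hbig : Real.sqrt 3.75 ≤ ‖1 + D / A‖) :
    ‖lam + D / (A * lam)‖ < Real.sqrt 3.75 := by
  set r : ℂ := D / A with hr
  set c : ℝ := Real.sqrt 3.75 with hc
  have hc0 : 0 ≤ c := Real.sqrt_nonneg _
  have hc2 : c ^ 2 = 3.75 := Real.sq_sqrt (by norm_num)
  have hlam0 : lam ≠ 0 := by
    intro h
    rw [h] at hlam
    simp at hlam
    linarith
  have hkey : lam + D / (A * lam) = (r - 1 + x * lam) / lam := by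
    rw [hx, hr]
    field_simp
    ring
  set a : ℝ := ‖lam‖ with ha
  have ha0 : 0 < a := lt_trans one_pos hlam
  have hs0 : 0 ≤ ‖x‖ := norm_nonneg _
  set s : ℝ := ‖x‖ with hs
  -- parallelogram
  have par : (‖r - 1‖) ^ 2 + (‖1 + r‖) ^ 2
      = 2 + 2 * (‖r‖) ^ 2 := by
    rw [Complex.sq_norm, Complex.sq_norm, Complex.sq_norm]
    simp [Complex.normSq_apply, Complex.sub_re, Complex.sub_im, Complex.add_re,
      Complex.add_im]
    ring
  have hrabs0 : 0 ≤ ‖r - 1‖ := norm_nonneg _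
  have hc4 : c < 2 := by nlinarith
  have hc19 : 1.9 < c := by nlinarith
  have hcs2 : 2 < (c - s) ^ 2 := by
    nlinarith [mul_pos (show (0:ℝ) < 1/2 - s by linarith)
        (show (0:ℝ) < 3.5 - s by linarith),
      mul_nonneg hs0 (show (0:ℝ) ≤ 4 - 2 * c by linarith)]
  have hsq : (‖r - 1‖) ^ 2 < ((c - s) * a) ^ 2 := by
    nlinarith [mul_pos (show (0:ℝ) < (c - s) ^ 2 - 2 by linarith) (mul_pos ha0 ha0),
      mul_self_le_mul_self (norm_nonneg r) hr2,
      mul_self_le_mul_self hc0 hbig]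
  have hcs : 0 ≤ (c - s) * a := by nlinarith
  have h5 : ‖r - 1‖ < (c - s) * a :=
    lt_of_pow_lt_pow_left₀ 2 hcs hsq
  rw [hkey, norm_div]
  rw [div_lt_iff₀ ha0]
  calc ‖r - 1 + x * lam‖ ≤ ‖r - 1‖ + ‖x * lam‖ :=
        norm_add_le _ _
    _ = ‖r - 1‖ + s * a := by rw [norm_mul]
    _ < (c - s) * a + s * a := by linarith
    _ = c * a := by ring
end

section
/- Let ρ: F₂ → SL(2,ℂ) be a representation of the free group on generators X, Y with tr ρ(XYX⁻¹Y⁻¹) = -2, where ρ(X) = diag(λ, λ⁻¹) and ρ(Y) = [[A,B],[C,D]]. Then AD = x²/(x²-4), where x = λ + λ⁻¹ = tr ρ(X). -/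
theorem stmt_15 (lam A B C D : ℂ) (hlam : lam ≠ 0) (hlam2 : lam ^ 2 ≠ 1)
    (M N : Matrix (Fin 2) (Fin 2) ℂ)
    (hM : M = !![lam, 0; 0, lam⁻¹]) (hN : N = !![A, B; C, D])
    (hdet : N.det = 1)
    (hcomm : (M * N * M⁻¹ * N⁻¹).trace = -2) :
    A * D = (lam + lam⁻¹) ^ 2 / ((lam + lam⁻¹) ^ 2 - 4) := by
  subst hM hN
  have hdetM : Matrix.det !![lam, 0; 0, lam⁻¹] = 1 := by
    simp [Matrix.det_fin_two_of]
    field_simp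
  have hdet' : A * D - B * C = 1 := by
    simpa [Matrix.det_fin_two_of] using hdet
  rw [Matrix.inv_def, Matrix.inv_def, hdetM, hdet, Ring.inverse_one, one_smul, one_smul,
    Matrix.adjugate_fin_two, Matrix.adjugate_fin_two] at hcomm
  simp only [Matrix.of_apply, Matrix.cons_val', Matrix.cons_val_zero, Matrix.cons_val_one,
    Matrix.head_cons, Matrix.head_fin_const, Matrix.empty_val', Matrix.cons_val_fin_one,
    Matrix.trace_fin_two_of, Matrix.mul_fin_two] at hcomm
  have hne : (lam + lam⁻¹) ^ 2 - 4 ≠ 0 := by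
    have : (lam + lam⁻¹) ^ 2 - 4 = (lam ^ 2 - 1) ^ 2 / lam ^ 2 := by
      field_simp; ring
    rw [this]
    exact div_ne_zero (pow_ne_zero 2 (sub_ne_zero.mpr hlam2)) (pow_ne_zero 2 hlam)
  field_simp at hcomm
  rw [eq_div_iff hne]
  field_simp
  linear_combination (-1 : ℂ) * hcomm + (lam^4 + 1) * hdet'
end
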